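/- Let ⟨P, ≤_P⟩ be a partial order whose bounding number (least size of an unbounded subset) is κ, let λ be a cardinal with |P| ≤ 2^λ and λ^κ = λ. Then the pointwise-product order ⟨^λP, ≤⟩ (f ≤ g iff f(α) ≤_P g(α) for all α < λ) has cofinality exactly 2^λ. Moreover there exist maps φ⁻ : ^λκ → ^λP and φ⁺ : ^λP → ^λκ such that for all g ∈ ^λκ and f ∈ ^λP, if φ⁻(g) ≤ f pointwise in P, then g ≤ φ⁺(f) pointwise in κ. -/

import Mathlib

open Cardinal Order
open scoped symmDiff

/-- The cofinality of the everywhere (pointwise) domination order on functions `X → K`. -/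
noncomputable def everyCof (X K : Type*) [LE K] : Cardinal :=
  sInf {c | ∃ D : Set (X → K), #D = c ∧ ∀ f : X → K, ∃ g ∈ D, ∀ x, f x ≤ g x}

/-- The cofinality of the eventual domination order on functions `X → K`. -/
noncomputable def evenCof (X K : Type*) [LE X] [LE K] : Cardinal :=
  sInf {c | ∃ D : Set (X → K), #D = c ∧
    ∀ f : X → K, ∃ g ∈ D, ∃ a : X, ∀ b : X, a ≤ b → f b ≤ g b}

/-- The bounding number of a partial order: the least cardinality of an unbounded subset. -/
noncomputable def boundingNumber (P : Type*) [PartialOrder P] : Cardinal :=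
  sInf {c | ∃ A : Set P, #A = c ∧ ¬ ∃ p : P, ∀ a ∈ A, a ≤ p}

/-- An increasing chain dominating a given family `a`, built by well-founded recursion. -/
noncomputable def tukeyChain {K P : Type*} [LT K] (wf : WellFounded ((· < ·) : K → K → Prop))
    [Preorder P] (a : K → P)
    (H : ∀ (α : K) (s : {β : K // β < α} → P), ∃ p : P, (∀ β, s β ≤ p) ∧ a α ≤ p) : K → P :=
  wf.fix fun α ih => (H α fun β => ih β.1 β.2).choose

theorem tukeyChain_spec {K P : Type*} [LT K] (wf : WellFounded ((· < ·) : K → K → Prop))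
    [Preorder P] (a : K → P)
    (H : ∀ (α : K) (s : {β : K // β < α} → P), ∃ p : P, (∀ β, s β ≤ p) ∧ a α ≤ p) (α : K) :
    (∀ β : {β : K // β < α}, tukeyChain wf a H β.1 ≤ tukeyChain wf a H α) ∧
      a α ≤ tukeyChain wf a H α := by
  have h : tukeyChain wf a H α = (H α fun β => tukeyChain wf a H β.1).choose :=
    wf.fix_eq _ α
  rw [h]
  exact (H α fun β => tukeyChain wf a H β.1).choose_spec

theorem Iio_small (k : Cardinal.{0}) (b : k.ord.ToType) : #(Set.Iio b) < k := by
  exact Cardinal.card_typein_toType_lt k b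

/-- Any everywhere-dominating family of functions `λ → κ` has size at least `2^λ`,
provided `λ^κ = λ`. -/
theorem domK_lower {X K : Type} [PartialOrder K] (k l : Cardinal.{0}) (hk : ℵ₀ ≤ k)
    (hl : ℵ₀ ≤ l) (hlk : l ^ k = l) (hXcard : #X = l) (hKcard : #K = k)
    (hIio : ∀ b : K, #(Set.Iio b) < k)
    (D : Set (X → K)) (hD : ∀ g : X → K, ∃ d ∈ D, ∀ x, g x ≤ d x) :
    2 ^ l ≤ #D := by
  classical
  have hl0 : l ≠ 0 := (aleph0_pos.trans_le hl).ne'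
  have hk0 : k ≠ 0 := (aleph0_pos.trans_le hk).ne'
  have hXne : Nonempty X := Cardinal.mk_ne_zero_iff.1 (by rw [hXcard]; exact hl0)
  have hKne : Nonempty K := Cardinal.mk_ne_zero_iff.1 (by rw [hKcard]; exact hk0)
  have h2l : (2 : Cardinal) ≤ l := le_trans (by exact_mod_cast (Cardinal.nat_lt_aleph0 2).le) hl
  have hKnomax : ∀ b : K, ∃ j : K, ¬ j ≤ b := by
    intro b
    by_contra hcon
    push_neg at hcon
    have huniv : (Set.univ : Set K) = insert b (Set.Iio b) := by
      ext y
      simp only [Set.mem_univ, Set.mem_insert_iff, Set.mem_Iio, true_iff]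
      rcases (hcon y).lt_or_eq with h | h
      · exact Or.inr h
      · exact Or.inl h
    have h2 : #K ≤ #(Set.Iio b) + 1 := by
      calc #K = #(Set.univ : Set K) := (Cardinal.mk_univ).symm
        _ = #(insert b (Set.Iio b) : Set K) := by rw [huniv]
        _ ≤ #(Set.Iio b) + 1 := Cardinal.mk_insert_le
    have h3 : #(Set.Iio b) + 1 < k :=
      Cardinal.add_lt_of_lt hk (hIio b) (one_lt_aleph0.trans_le hk)
    rw [hKcard] at h2
    exact absurd (h2.trans_lt h3) (lt_irrefl k)
  -- a surjection from X onto the coding space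
  have hKK : #(K × K) = k := by
    simp only [Cardinal.mk_prod, Cardinal.lift_id, hKcard, Cardinal.mul_eq_self hk]
  have h1C : #(K × K → X) = l := by
    rw [← Cardinal.power_def, hXcard, hKK, hlk]
  have h2C : #(K × K → Bool) ≤ l := by
    rw [← Cardinal.power_def, Cardinal.mk_bool, hKK]
    calc (2 : Cardinal) ^ k ≤ l ^ k := Cardinal.power_le_power_right h2l
      _ = l := hlk
  have hC : #((K × K → X) × (K × K → Bool)) ≤ #X := by
    simp only [Cardinal.mk_prod, Cardinal.lift_id, hXcard]
    calc #(K × K → X) * #(K × K → Bool) ≤ l * l := by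
          exact mul_le_mul' h1C.le h2C
      _ = l := Cardinal.mul_eq_self hl
  haveI := hXne; haveI := hKne
  obtain ⟨emb⟩ := Cardinal.le_def _ _ |>.1 hC
  set π : X → (K × K → X) × (K × K → Bool) := Function.invFun emb with hπdef
  have hπ : Function.Surjective π := Function.invFun_surjective emb.injective
  -- the coding functions
  set f : Set X → X → K := fun A x =>
    if h : ∃ j : K, ∀ j' : K, ((π x).1 (j, j') ∈ A ↔ (π x).2 (j, j') = true) then h.choose
    else hKne.some with hfdef
  -- key smallness claim
  have key : ∀ d : X → K, #{A : Set X | ∀ x, f A x ≤ d x} < k := by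
    intro d
    by_contra hcon
    push_neg at hcon
    obtain ⟨v⟩ := Cardinal.le_def _ _ |>.1 (hKcard.le.trans hcon)
    have hAle : ∀ j : K, ∀ x, f (v j).1 x ≤ d x := fun j => (v j).2
    have hAinj : ∀ i j : K, i ≠ j → ((v i).1 : Set X) ≠ (v j).1 := by
      intro i j hij hEq
      exact hij (v.injective (Subtype.ext hEq))
    set e : K × K → X := fun q =>
      if h : (((v q.1).1 : Set X) ∆ (v q.2).1).Nonempty then h.choose else hXne.some with hedef
    set p : K × K → Bool := fun q => decide (e q ∈ ((v q.1).1 : Set X)) with hpdef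
    obtain ⟨x₀, hx₀⟩ := hπ (e, p)
    have hx₁ : (π x₀).1 = e := by rw [hx₀]
    have hx₂ : (π x₀).2 = p := by rw [hx₀]
    have hmatch : ∀ j : K, ∀ j' : K, (e (j, j') ∈ ((v j).1 : Set X) ↔ p (j, j') = true) := by
      intro j j'
      simp [hpdef]
    have huniq : ∀ j i : K,
        (∀ j' : K, (e (i, j') ∈ ((v j).1 : Set X) ↔ p (i, j') = true)) → i = j := by
      intro j i hmat
      by_contra hij
      have hne : ((((v i).1 : Set X)) ∆ ((v j).1 : Set X)).Nonempty := by
        rw [Set.nonempty_iff_ne_empty]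
        intro h0
        exact hAinj i j hij (symmDiff_eq_bot.1 h0)
      have hch : e (i, j) ∈ (((v i).1 : Set X)) ∆ ((v j).1 : Set X) := by
        have : e (i, j) = hne.choose := by
          rw [hedef]; exact dif_pos hne
        rw [this]
        exact hne.choose_spec
      have hp' := hmat j
      rw [hpdef] at hp'
      simp only [decide_eq_true_eq] at hp'
      rcases Set.mem_symmDiff.1 hch with ⟨h1, h2⟩ | ⟨h1, h2⟩
      · exact h2 (hp'.2 h1)
      · exact h2 (hp'.1 h1)
    have hfval : ∀ j : K, f (v j).1 x₀ = j := by
      intro j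
      have hex : ∃ jj : K, ∀ j' : K,
          ((π x₀).1 (jj, j') ∈ ((v j).1 : Set X) ↔ (π x₀).2 (jj, j') = true) :=
        ⟨j, by simpa [hx₁, hx₂] using hmatch j⟩
      have hval : f ((v j) : Set X) x₀ = hex.choose := dif_pos hex
      rw [hval]
      refine huniq j hex.choose ?_
      have := hex.choose_spec
      simpa [hx₁, hx₂] using this
    have hall : ∀ j : K, j ≤ d x₀ := fun j => hfval j ▸ hAle j x₀
    obtain ⟨j, hj⟩ := hKnomax (d x₀)
    exact hj (hall j)
  -- counting
  choose dd hdd1 hdd2 using fun A : Set X => hD (f A)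
  by_contra hcon
  push_neg at hcon
  have hinj : Function.Injective (fun A : Set X =>
      (⟨⟨dd A, hdd1 A⟩, ⟨A, hdd2 A⟩⟩ :
        Σ d : D, {A : Set X // ∀ x, f A x ≤ (d : X → K) x})) := by
    intro A B h
    exact congrArg
      (fun z : (Σ d : D, {A : Set X // ∀ x, f A x ≤ (d : X → K) x}) => z.2.1) h
  have h1 : 2 ^ l ≤ #(Σ d : D, {A : Set X // ∀ x, f A x ≤ (d : X → K) x}) := by
    calc (2 : Cardinal) ^ l = #(Set X) := by rw [Cardinal.mk_set, hXcard]
      _ ≤ _ := Cardinal.mk_le_of_injective hinj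
  have h2 : #(Σ d : D, {A : Set X // ∀ x, f A x ≤ (d : X → K) x}) ≤ #D * k := by
    rw [Cardinal.mk_sigma]
    calc (Cardinal.sum fun d : D => #{A : Set X // ∀ x, f A x ≤ (d : X → K) x})
        ≤ Cardinal.sum fun _ : D => k :=
          Cardinal.sum_le_sum _ _ (fun d => (key (d : X → K)).le)
      _ = #D * k := Cardinal.sum_const' _ _
  have hk2l : k < 2 ^ l :=
    ((Cardinal.cantor k).trans_le
      ((Cardinal.power_le_power_right h2l).trans hlk.le)).trans (Cardinal.cantor l)
  have h3 : #D * k < 2 ^ l :=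
    Cardinal.mul_lt_of_lt (hl.trans (Cardinal.cantor l).le) hcon hk2l
  exact absurd (h1.trans h2) (not_le.mpr h3)

theorem stmt_17 (P : Type) [PartialOrder P] (k l : Cardinal) (hk : ℵ₀ ≤ k)
    (hb : boundingNumber P = k) (hP : #P ≤ 2 ^ l) (hl : ℵ₀ ≤ l) (hlk : l ^ k = l) :
    everyCof l.ord.ToType P = 2 ^ l ∧
    ∃ (φm : (l.ord.ToType → k.ord.ToType) → (l.ord.ToType → P))
      (φp : (l.ord.ToType → P) → (l.ord.ToType → k.ord.ToType)),
      ∀ (g : l.ord.ToType → k.ord.ToType) (f : l.ord.ToType → P),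
        (∀ x, φm g x ≤ f x) → ∀ x, g x ≤ φp f x := by
  classical
  set X := l.ord.ToType with hXdef
  set K := k.ord.ToType with hKdef
  have hk0 : k ≠ 0 := (aleph0_pos.trans_le hk).ne'
  have hKcard : #K = k := by rw [hKdef, Cardinal.mk_toType, Cardinal.card_ord]
  have hKne : Nonempty K :=
    Ordinal.toType_nonempty_iff_ne_zero.2 (fun h => hk0 (Cardinal.ord_eq_zero.1 h))
  have hIio : ∀ b : K, #(Set.Iio b) < k := fun b => Iio_small k b
  -- every subset of P of size < k is bounded
  have hbdd : ∀ A : Set P, #A < k → ∃ p : P, ∀ a ∈ A, a ≤ p := by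
    intro A hA
    by_contra hcon
    have hmem : #A ∈ {c | ∃ A : Set P, #A = c ∧ ¬ ∃ p : P, ∀ a ∈ A, a ≤ p} := ⟨A, rfl, hcon⟩
    have := csInf_le' hmem
    rw [← boundingNumber, hb] at this
    exact absurd (this.trans_lt hA) (lt_irrefl k)
  -- there is an unbounded subset of size k
  have hSne : {c | ∃ A : Set P, #A = c ∧ ¬ ∃ p : P, ∀ a ∈ A, a ≤ p}.Nonempty := by
    by_contra hcon
    rw [Set.not_nonempty_iff_eq_empty] at hcon
    have : boundingNumber P = 0 := by rw [boundingNumber, hcon, Cardinal.sInf_empty]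
    rw [hb] at this
    exact hk0 this
  have hmem := csInf_mem hSne
  rw [← boundingNumber, hb] at hmem
  obtain ⟨A, hAcard, hAunb⟩ := hmem
  -- an unbounded family indexed by K
  obtain ⟨ee⟩ := Cardinal.eq.1 (hKcard.trans hAcard.symm)
  set a : K → P := fun j => ((ee j : A) : P) with hadef
  have haunb : ¬ ∃ p : P, ∀ j : K, a j ≤ p := by
    rintro ⟨p, hp⟩
    refine hAunb ⟨p, fun q hq => ?_⟩
    have h2 := hp (ee.symm ⟨q, hq⟩)
    rw [hadef] at h2
    simp only [Equiv.apply_symm_apply] at h2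
    exact h2
  -- hypothesis for the chain construction
  have HH : ∀ (α : K) (s : {β : K // β < α} → P), ∃ p : P, (∀ β, s β ≤ p) ∧ a α ≤ p := by
    intro α s
    have hunion : #(Set.range s ∪ {a α} : Set P) ≤ #(Set.Iio α) + 1 := by
      refine (Cardinal.mk_union_le _ _).trans (add_le_add ?_ ?_)
      · exact Cardinal.mk_range_le
      · rw [Cardinal.mk_singleton]
    have hcard : #(Set.range s ∪ {a α} : Set P) < k :=
      hunion.trans_lt (Cardinal.add_lt_of_lt hk (hIio α) (one_lt_aleph0.trans_le hk))
    obtain ⟨p, hp⟩ := hbdd _ hcard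
    exact ⟨p, fun β => hp _ (Set.mem_union_left _ ⟨β, rfl⟩), hp _ (Set.mem_union_right _ rfl)⟩
  have wf : WellFounded ((· < ·) : K → K → Prop) := wellFounded_lt
  set c : K → P := tukeyChain wf a HH with hcdef
  have hcmono : ∀ i j : K, i ≤ j → c i ≤ c j := by
    intro i j hij
    rcases hij.lt_or_eq with h | h
    · exact (tukeyChain_spec wf a HH j).1 ⟨i, h⟩
    · rw [h]
  have hca : ∀ j : K, a j ≤ c j := fun j => (tukeyChain_spec wf a HH j).2
  have hcunb : ∀ p : P, {j : K | ¬ c j ≤ p}.Nonempty := by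
    intro p
    by_contra hcon
    rw [Set.not_nonempty_iff_eq_empty] at hcon
    refine haunb ⟨p, fun j => (hca j).trans ?_⟩
    by_contra hc2
    have : j ∈ {j : K | ¬ c j ≤ p} := hc2
    rw [hcon] at this
    exact this
  set φm : (X → K) → X → P := fun g x => c (g x) with hφm
  set φp : (X → P) → X → K := fun f x => wf.min {j : K | ¬ c j ≤ f x} (hcunb (f x)) with hφp
  have hTukey : ∀ (g : X → K) (f : X → P), (∀ x, φm g x ≤ f x) → ∀ x, g x ≤ φp f x := by
    intro g f hgf x
    by_contra hcon
    rw [not_le] at hcon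
    have h1 : c (φp f x) ≤ c (g x) := hcmono _ _ hcon.le
    have h2 : ¬ c (φp f x) ≤ f x := wf.min_mem {j : K | ¬ c j ≤ f x} (hcunb (f x))
    exact h2 (h1.trans (hgf x))
  refine ⟨?_, φm, φp, hTukey⟩
  have hmem : #(X → P) ∈
      {c | ∃ D : Set (X → P), #D = c ∧ ∀ f : X → P, ∃ g ∈ D, ∀ x, f x ≤ g x} :=
    ⟨Set.univ, by rw [Cardinal.mk_univ], fun f => ⟨f, Set.mem_univ f, fun x => le_rfl⟩⟩
  apply le_antisymm
  · have h1 : everyCof X P ≤ #(X → P) := csInf_le' hmem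
    have h2 : #(X → P) ≤ 2 ^ l := by
      rw [← Cardinal.power_def]
      have hXcard : #X = l := by rw [hXdef, Cardinal.mk_toType, Cardinal.card_ord]
      rw [hXcard]
      calc #P ^ l ≤ (2 ^ l) ^ l := Cardinal.power_le_power_right hP
        _ = 2 ^ (l * l) := Cardinal.power_mul.symm
        _ = 2 ^ l := by rw [Cardinal.mul_eq_self hl]
    exact h1.trans h2
  · refine le_csInf ⟨_, hmem⟩ ?_
    rintro b ⟨D, hDb, hdom⟩
    have hdom' : ∀ g : X → K, ∃ d' ∈ (φp '' D), ∀ x, g x ≤ d' x := by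
      intro g
      obtain ⟨d, hdD, hd⟩ := hdom (φm g)
      exact ⟨φp d, Set.mem_image_of_mem _ hdD, hTukey g d hd⟩
    calc (2 : Cardinal) ^ l ≤ #(φp '' D) := domK_lower k l hk hl hlk
          (by rw [hXdef, Cardinal.mk_toType, Cardinal.card_ord]) hKcard hIio (φp '' D) hdom'
      _ ≤ #D := Cardinal.mk_image_le
      _ = b := hDb
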